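/- arXiv:1408.3896 — 3 statements merged into one kernel-verified Lean document; each statement's English description precedes it below -/
import Mathlib

section
/- With the setup of dual lattices L, L̃ in V = V₁ ⊕ V₂, Ṽ = Ṽ₁ ⊕ Ṽ₂ with V₁ ⊥ Ṽ₂ and V₂ ⊥ Ṽ₁, set Lᵢ = L ∩ Vᵢ and Λᵢ = πᵢ(L). Then the projection maps π₁ and π₂ induce O-module isomorphisms L/(L₁ ⊕ L₂) ≅ Λ₁/L₁ and L/(L₁ ⊕ L₂) ≅ Λ₂/L₂. -/
theorem auxSide (O : Type*) [CommRing O]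
    (E : Type*) [Field E] [Algebra O E]
    (V : Type*) [AddCommGroup V] [Module E V]
    [Module O V] [IsScalarTower O E V]
    (V₁ V₂ : Submodule E V) (hV : IsCompl V₁ V₂)
    (L L₁ L₂ Λ₁ : Submodule O V)
    (hL₁ : L₁ = L ⊓ V₁.restrictScalars O) (hL₂ : L₂ = L ⊓ V₂.restrictScalars O)
    (hΛ₁ : Λ₁ = Submodule.map (LinearMap.restrictScalars O
      (V₁.subtype.comp (Submodule.linearProjOfIsCompl V₁ V₂ hV))) L)
    (g₁ : ↥L →ₗ[O] ↥Λ₁)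
    (hg₁ : ∀ x : ↥L, (g₁ x : V)
        = V₁.subtype (Submodule.linearProjOfIsCompl V₁ V₂ hV (x : V))) :
    LinearMap.ker ((Submodule.comap Λ₁.subtype L₁).mkQ.comp g₁)
        = Submodule.comap L.subtype (L₁ ⊔ L₂)
      ∧ Function.Surjective ((Submodule.comap Λ₁.subtype L₁).mkQ.comp g₁) := by
  set p := Submodule.linearProjOfIsCompl V₁ V₂ hV with hp
  constructor
  · ext x
    simp only [LinearMap.mem_ker, LinearMap.comp_apply, Submodule.mkQ_apply,
      Submodule.Quotient.mk_eq_zero, Submodule.mem_comap, Submodule.subtype_apply, hg₁ x]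
    constructor
    · intro h
      have hL : (p (x : V) : V) ∈ L := (hL₁ ▸ h).1
      have hsub : (x : V) - (p (x : V) : V) ∈ L₂ := by
        rw [hL₂]
        refine ⟨L.sub_mem x.2 hL, ?_⟩
        show (x : V) - (p (x : V) : V) ∈ V₂
        rw [← Submodule.linearProjOfIsCompl_apply_eq_zero_iff hV, map_sub]
        simp
        exact sub_self _
      have := Submodule.add_mem_sup h hsub
      simpa using this
    · intro h
      obtain ⟨a, ha, b, hb, hab⟩ := Submodule.mem_sup.1 h
      have ha1 : a ∈ V₁ := (hL₁ ▸ ha).2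
      have hb2 : b ∈ V₂ := (hL₂ ▸ hb).2
      have : (p (x : V) : V) = a := by
        rw [← hab, map_add, Submodule.coe_add,
          show p b = 0 from Submodule.projectionOnto_apply_of_mem_right hV hb2,
          show p a = ⟨a, ha1⟩ from Submodule.linearProjOfIsCompl_apply_left hV ⟨a, ha1⟩]
        simp
      rw [this]; exact ha
  · intro y
    obtain ⟨z, rfl⟩ := Submodule.mkQ_surjective _ y
    have hz : (z : V) ∈ Submodule.map (LinearMap.restrictScalars O
        (V₁.subtype.comp (Submodule.linearProjOfIsCompl V₁ V₂ hV))) L := by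
      rw [← hΛ₁]; exact z.2
    obtain ⟨x, hx, hxz⟩ := hz
    refine ⟨⟨x, hx⟩, ?_⟩
    simp only [LinearMap.comp_apply]
    congr 1
    exact Subtype.ext ((hg₁ ⟨x, hx⟩).trans hxz)

/-- The projections π₁, π₂ induce isomorphisms L/(L₁ ⊕ L₂) ≅ Λ₁/L₁ and L/(L₁ ⊕ L₂) ≅ Λ₂/L₂:
the composite map L → Λᵢ → Λᵢ/Lᵢ induced by πᵢ is surjective with kernel L₁ ⊔ L₂. -/
theorem stmt1 (O : Type*) [CommRing O] [IsDomain O] [IsDiscreteValuationRing O]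
    (E : Type*) [Field E] [Algebra O E] [IsFractionRing O E]
    (V Vt : Type*) [AddCommGroup V] [Module E V] [FiniteDimensional E V]
    [AddCommGroup Vt] [Module E Vt] [FiniteDimensional E Vt]
    [Module O V] [IsScalarTower O E V] [Module O Vt] [IsScalarTower O E Vt]
    (B : V →ₗ[E] Vt →ₗ[E] E)
    (hBnd₁ : ∀ v : V, v ≠ 0 → ∃ w, B v w ≠ 0)
    (hBnd₂ : ∀ w : Vt, w ≠ 0 → ∃ v, B v w ≠ 0)
    (L : Submodule O V) (Lt : Submodule O Vt)
    (hLfg : L.FG) (hLspan : Submodule.span E (L : Set V) = ⊤)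
    (hLtfg : Lt.FG) (hLtspan : Submodule.span E (Lt : Set Vt) = ⊤)
    (hdual₁ : ∀ w : Vt, w ∈ Lt ↔ ∀ v ∈ L, B v w ∈ Set.range (algebraMap O E))
    (hdual₂ : ∀ v : V, v ∈ L ↔ ∀ w ∈ Lt, B v w ∈ Set.range (algebraMap O E))
    (V₁ V₂ : Submodule E V) (hV : IsCompl V₁ V₂)
    (W₁ W₂ : Submodule E Vt) (hW : IsCompl W₁ W₂)
    (hperp₁ : ∀ v ∈ V₁, ∀ w ∈ W₂, B v w = 0)
    (hperp₂ : ∀ v ∈ V₂, ∀ w ∈ W₁, B v w = 0)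
    (L₁ L₂ : Submodule O V)
    (hL₁ : L₁ = L ⊓ V₁.restrictScalars O) (hL₂ : L₂ = L ⊓ V₂.restrictScalars O)
    (Λ₁ Λ₂ : Submodule O V)
    (hΛ₁ : Λ₁ = Submodule.map (LinearMap.restrictScalars O
      (V₁.subtype.comp (Submodule.linearProjOfIsCompl V₁ V₂ hV))) L)
    (hΛ₂ : Λ₂ = Submodule.map (LinearMap.restrictScalars O
      (V₂.subtype.comp (Submodule.linearProjOfIsCompl V₂ V₁ hV.symm))) L) :
    (∀ g₁ : ↥L →ₗ[O] ↥Λ₁,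
      (∀ x : ↥L, (g₁ x : V)
          = V₁.subtype (Submodule.linearProjOfIsCompl V₁ V₂ hV (x : V))) →
      LinearMap.ker ((Submodule.comap Λ₁.subtype L₁).mkQ.comp g₁)
          = Submodule.comap L.subtype (L₁ ⊔ L₂)
        ∧ Function.Surjective ((Submodule.comap Λ₁.subtype L₁).mkQ.comp g₁)) ∧
    (∀ g₂ : ↥L →ₗ[O] ↥Λ₂,
      (∀ x : ↥L, (g₂ x : V)
          = V₂.subtype (Submodule.linearProjOfIsCompl V₂ V₁ hV.symm (x : V))) →
      LinearMap.ker ((Submodule.comap Λ₂.subtype L₂).mkQ.comp g₂)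
          = Submodule.comap L.subtype (L₁ ⊔ L₂)
        ∧ Function.Surjective ((Submodule.comap Λ₂.subtype L₂).mkQ.comp g₂)) := by
  refine ⟨fun g₁ hg₁ => ?_, fun g₂ hg₂ => ?_⟩
  · exact auxSide O E V V₁ V₂ hV L L₁ L₂ Λ₁ hL₁ hL₂ hΛ₁ g₁ hg₁
  · have := auxSide O E V V₂ V₁ hV.symm L L₂ L₁ Λ₂ hL₂ hL₁ hΛ₂ g₂ hg₂
    rwa [sup_comm L₂ L₁] at this
end

section
/- Let O be a DVR with maximal ideal ℘ and fraction field E, and let V, Ṽ, L, L̃, V₁, Ṽ₁, L₁, L̃₁, Λ₁ be as in the lattice setup with perfect pairing. Then the congruence module C(L; V₁, V₂) = L/(L₁ ⊕ L₂) is nonzero if and only if the discriminant disc(L₁ × L̃₁) (the index |L̃₁*/L₁| as an ideal of O, where the dual is taken inside V₁) has positive ℘-adic valuation. -/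
/-- The congruence module C(L; V₁, V₂) = L/(L₁ ⊕ L₂) is nonzero iff the discriminant
disc(L₁ × L̃₁) has positive ℘-adic valuation, i.e. iff the dual lattice L̃₁* (inside V₁)
strictly contains L₁. -/
theorem stmt2 (O : Type*) [CommRing O] [IsDomain O] [IsDiscreteValuationRing O]
    (E : Type*) [Field E] [Algebra O E] [IsFractionRing O E]
    (V Vt : Type*) [AddCommGroup V] [Module E V] [FiniteDimensional E V]
    [AddCommGroup Vt] [Module E Vt] [FiniteDimensional E Vt]
    [Module O V] [IsScalarTower O E V] [Module O Vt] [IsScalarTower O E Vt]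
    (B : V →ₗ[E] Vt →ₗ[E] E)
    (hBnd₁ : ∀ v : V, v ≠ 0 → ∃ w, B v w ≠ 0)
    (hBnd₂ : ∀ w : Vt, w ≠ 0 → ∃ v, B v w ≠ 0)
    (L : Submodule O V) (Lt : Submodule O Vt)
    (hLfg : L.FG) (hLspan : Submodule.span E (L : Set V) = ⊤)
    (hLtfg : Lt.FG) (hLtspan : Submodule.span E (Lt : Set Vt) = ⊤)
    (hdual₁ : ∀ w : Vt, w ∈ Lt ↔ ∀ v ∈ L, B v w ∈ Set.range (algebraMap O E))
    (hdual₂ : ∀ v : V, v ∈ L ↔ ∀ w ∈ Lt, B v w ∈ Set.range (algebraMap O E))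
    (V₁ V₂ : Submodule E V) (hV : IsCompl V₁ V₂)
    (W₁ W₂ : Submodule E Vt) (hW : IsCompl W₁ W₂)
    (hperp₁ : ∀ v ∈ V₁, ∀ w ∈ W₂, B v w = 0)
    (hperp₂ : ∀ v ∈ V₂, ∀ w ∈ W₁, B v w = 0)
    (L₁ L₂ : Submodule O V)
    (hL₁ : L₁ = L ⊓ V₁.restrictScalars O) (hL₂ : L₂ = L ⊓ V₂.restrictScalars O) :
    Nontrivial (↥L ⧸ Submodule.comap L.subtype (L₁ ⊔ L₂)) ↔
      {v : V | v ∈ V₁ ∧ ∀ w : Vt, w ∈ Lt → w ∈ W₁ →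
        B v w ∈ Set.range (algebraMap O E)} ≠ (L₁ : Set V) := by
  subst hL₁ hL₂
  set S := {v : V | v ∈ V₁ ∧ ∀ w : Vt, w ∈ Lt → w ∈ W₁ →
      B v w ∈ Set.range (algebraMap O E)} with hS
  -- L₁ ⊆ S always
  have hL₁S : ((L ⊓ V₁.restrictScalars O : Submodule O V) : Set V) ⊆ S := by
    rintro v ⟨hvL, hvV₁⟩
    exact ⟨hvV₁, fun w hwLt _ => (hdual₂ v).mp hvL w hwLt⟩
  have key : Nontrivial (↥L ⧸ Submodule.comap L.subtype
      ((L ⊓ V₁.restrictScalars O) ⊔ (L ⊓ V₂.restrictScalars O))) ↔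
      ¬ L ≤ (L ⊓ V₁.restrictScalars O) ⊔ (L ⊓ V₂.restrictScalars O) := by
    rw [← not_subsingleton_iff_nontrivial, Submodule.Quotient.subsingleton_iff,
      Submodule.comap_subtype_eq_top]
  rw [key]
  constructor
  · intro hnle
    -- find x ∈ L not in the sup
    obtain ⟨x, hxL, hxns⟩ : ∃ x ∈ L,
        x ∉ (L ⊓ V₁.restrictScalars O) ⊔ (L ⊓ V₂.restrictScalars O) := by
      by_contra h
      push_neg at h
      exact hnle h
    -- decompose x
    obtain ⟨x₁, hx₁, x₂, hx₂, hsum⟩ :=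
      Submodule.mem_sup.mp (hV.sup_eq_top ▸ Submodule.mem_top : x ∈ V₁ ⊔ V₂)
    intro hSL₁
    -- x₁ ∈ S
    have hx₁S : x₁ ∈ S := by
      refine ⟨hx₁, fun w hwLt hwW₁ => ?_⟩
      have h2 : B x₂ w = 0 := hperp₂ x₂ hx₂ w hwW₁
      have : B x₁ w = B x w := by
        rw [← hsum]; simp [h2]
      rw [this]
      exact (hdual₂ x).mp hxL w hwLt
    rw [hSL₁] at hx₁S
    have hx₂L : x₂ ∈ L := by
      have : x₂ = x - x₁ := by rw [← hsum]; abel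
      rw [this]
      exact Submodule.sub_mem _ hxL hx₁S.1
    exact hxns (Submodule.mem_sup.mpr ⟨x₁, hx₁S, x₂, ⟨hx₂L, hx₂⟩, hsum⟩)
  · intro hne hle
    apply hne
    apply Set.Subset.antisymm _ hL₁S
    rintro v ⟨hvV₁, hvd⟩
    have hvL : v ∈ L := by
      rw [hdual₂]
      intro w hwLt
      obtain ⟨w₁, hw₁, w₂, hw₂, hwsum⟩ :=
        Submodule.mem_sup.mp (hW.sup_eq_top ▸ Submodule.mem_top : w ∈ W₁ ⊔ W₂)
      have hw₁Lt : w₁ ∈ Lt := by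
        rw [hdual₁]
        intro u huL
        obtain ⟨a, ha, b, hb, habsum⟩ := Submodule.mem_sup.mp (hle huL)
        have hb0 : B b w₁ = 0 := hperp₂ b hb.2 w₁ hw₁
        have ha2 : B a w₂ = 0 := hperp₁ a ha.2 w₂ hw₂
        have : B u w₁ = B a w := by
          rw [← habsum, ← hwsum]; simp [hb0, ha2]
        rw [this]
        exact (hdual₂ a).mp ha.1 w hwLt
      have hv2 : B v w₂ = 0 := hperp₁ v hvV₁ w₂ hw₂
      have : B v w = B v w₁ := by rw [← hwsum]; simp [hv2]
      rw [this]
      exact hvd w₁ hw₁Lt hw₁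
    exact ⟨hvL, hvV₁⟩
end

section
/- Let O be a DVR, H° a commutative O-subalgebra of End_O(L) for a finite free O-module L, and suppose H°_E := H° ⊗ E decomposes as e₁H°_E × e₂H°_E for complementary idempotents e₁, e₂ ∈ H°_E. Set H°ᵢ = H° ∩ eᵢH°_E. Then there are natural isomorphisms H°/(H°₁ ⊕ H°₂) ≅ e₁H°/H°₁ ≅ e₂H°/H°₂ of O-modules. -/
open TensorProduct

/-- Key algebraic lemma: for complementary idempotents `e, f` in a commutative
`O`-algebra `B` and a submodule `H`, with `C = e*H`, `He = H ⊓ eB`, `Hf = H ⊓ fB`,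
one has `H/(He ⊔ Hf) ≃ C/He`. -/
theorem stmt3_key {O B : Type*} [CommRing O] [CommRing B] [Algebra O B]
    (e f : B) (hsum : e + f = 1) (horth : e * f = 0) (hide : e * e = e)
    (H : Submodule O B)
    (C He Hf : Submodule O B)
    (hC : C = Submodule.map (LinearMap.mulLeft O e) H)
    (hHe : He = H ⊓ LinearMap.range (LinearMap.mulLeft O e))
    (hHf : Hf = H ⊓ LinearMap.range (LinearMap.mulLeft O f)) :
    Nonempty ((↥H ⧸ Submodule.comap H.subtype (He ⊔ Hf)) ≃ₗ[O]
        (↥C ⧸ Submodule.comap C.subtype He)) := by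
  -- the map H → C, x ↦ e * x
  have hmem : ∀ x ∈ H, e * x ∈ C := by
    intro x hx
    rw [hC]
    exact Submodule.mem_map_of_mem hx
  let g : ↥H →ₗ[O] ↥C := (LinearMap.mulLeft O e).restrict (fun x hx => hmem x hx)
  let φ : ↥H →ₗ[O] (↥C ⧸ Submodule.comap C.subtype He) :=
    (Submodule.comap C.subtype He).mkQ ∘ₗ g
  have hgval : ∀ x : ↥H, ((g x : B)) = e * (x : B) := fun x => rfl
  have hsurj : Function.Surjective φ := by
    intro c
    obtain ⟨⟨y, hy⟩, rfl⟩ := (Submodule.comap C.subtype He).mkQ_surjective c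
    rw [hC] at hy
    obtain ⟨x, hx, hex⟩ := hy
    refine ⟨⟨x, hx⟩, ?_⟩
    simp only [φ, LinearMap.comp_apply]
    congr 1
    exact Subtype.ext (by simpa [hgval] using hex)
  have hker : LinearMap.ker φ = Submodule.comap H.subtype (He ⊔ Hf) := by
    ext x
    have hx : (x : B) ∈ H := x.2
    simp only [LinearMap.mem_ker, φ, LinearMap.comp_apply, Submodule.Quotient.mk_eq_zero,
      Submodule.mkQ_apply, Submodule.mem_comap, Submodule.subtype_apply]
    rw [show (↑(g x) : B) = e * (x : B) from rfl]
    constructor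
    · intro h
      have hfx : f * (x : B) ∈ Hf := by
        rw [hHf]
        refine ⟨?_, ⟨(x : B), rfl⟩⟩
        have : f * (x : B) = x - e * (x : B) := by
          have := congrArg (· * (x : B)) hsum
          simp only [add_mul, one_mul] at this
          linear_combination this
        rw [this]
        exact Submodule.sub_mem H hx (hHe ▸ h).1
      have hx' : (x : B) = e * (x : B) + f * (x : B) := by
        have := congrArg (· * (x : B)) hsum
        simp only [add_mul, one_mul] at this
        exact this.symm
      rw [hx']
      exact Submodule.add_mem_sup h hfx
    · intro h
      obtain ⟨a, ha, b, hb, hab⟩ := Submodule.mem_sup.mp h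
      obtain ⟨-, y, hy⟩ := hHe ▸ ha
      obtain ⟨-, z, hz⟩ := hHf ▸ hb
      have hea : e * a = a := by
        rw [← hy]
        simp only [LinearMap.mulLeft_apply] at *
        rw [← mul_assoc, hide]
      have heb : e * b = 0 := by
        rw [← hz]
        simp only [LinearMap.mulLeft_apply] at *
        rw [← mul_assoc, horth, zero_mul]
      rw [← hab, mul_add, hea, heb, add_zero]
      exact ha
  exact ⟨(Submodule.quotEquivOfEq _ _ hker.symm) ≪≫ₗ φ.quotKerEquivOfSurjective hsurj⟩

/-- For a commutative O-subalgebra H° of End_O(L) (modelled by a commutative O-algebra A,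
finite free as an O-module) with H°_E = E ⊗ A = e₁H°_E × e₂H°_E, setting
H°ᵢ = H° ∩ eᵢH°_E, one has natural isomorphisms
H°/(H°₁ ⊕ H°₂) ≅ e₁H°/H°₁ ≅ e₂H°/H°₂ of O-modules. -/
theorem stmt3 (O : Type*) [CommRing O] [IsDomain O] [IsDiscreteValuationRing O]
    (E : Type*) [Field E] [Algebra O E] [IsFractionRing O E]
    (A : Type*) [CommRing A] [Algebra O A] [Module.Finite O A] [Module.Free O A]
    (e₁ e₂ : E ⊗[O] A)
    (hsum : e₁ + e₂ = 1) (horth : e₁ * e₂ = 0)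
    (hid₁ : e₁ * e₁ = e₁) (hid₂ : e₂ * e₂ = e₂)
    -- H = image of H° in H°_E,   Cᵢ = eᵢH°,   H°ᵢ = H° ∩ eᵢH°_E
    (H : Submodule O (E ⊗[O] A))
    (hH : H = LinearMap.range ((Algebra.TensorProduct.includeRight :
        A →ₐ[O] E ⊗[O] A).toLinearMap))
    (C₁ C₂ H₁ H₂ : Submodule O (E ⊗[O] A))
    (hC₁ : C₁ = Submodule.map (LinearMap.mulLeft O e₁) H)
    (hC₂ : C₂ = Submodule.map (LinearMap.mulLeft O e₂) H)
    (hH₁ : H₁ = H ⊓ LinearMap.range (LinearMap.mulLeft O e₁))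
    (hH₂ : H₂ = H ⊓ LinearMap.range (LinearMap.mulLeft O e₂)) :
    Nonempty ((↥H ⧸ Submodule.comap H.subtype (H₁ ⊔ H₂)) ≃ₗ[O]
        (↥C₁ ⧸ Submodule.comap C₁.subtype H₁)) ∧
    Nonempty ((↥H ⧸ Submodule.comap H.subtype (H₁ ⊔ H₂)) ≃ₗ[O]
        (↥C₂ ⧸ Submodule.comap C₂.subtype H₂)) := by
  constructor
  · exact stmt3_key e₁ e₂ hsum horth hid₁ H C₁ H₁ H₂ hC₁ hH₁ hH₂
  · have h := stmt3_key e₂ e₁ (by rw [add_comm]; exact hsum) (by rw [mul_comm]; exact horth)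
      hid₂ H C₂ H₂ H₁ hC₂ hH₂ hH₁
    rwa [sup_comm] at h
end
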